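/- Let W act on a free abelian group Λ of finite rank with Λ^W = 0 and let χ ∈ Λ. Then 24·φ^{(4)}(ρ(χ)) = Σ_{λ∈W(χ)} (λ⁴ + 6λ(2)λ² + 8λ(3)λ + 3λ(2)²) in S⁴(Λ). -/
import Mathlib


open MvPolynomial

/-- Identify `λ ∈ Λ = Fin n →₀ ℤ` with `λ(m) = Σⱼ λⱼ Xⱼ^m ∈ S^m(Λ)`. -/
noncomputable def weightPow' (n : ℕ) (m : ℕ) (v : Fin n →₀ ℤ) : MvPolynomial (Fin n) ℤ :=
  ∑ j, v j • (MvPolynomial.X j) ^ m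

/-- For an essential action (`Λ^W = 0`) of a finite group `W` on `Λ = Fin n →₀ ℤ` and
`χ ∈ Λ` with orbit finset `O`:
`24·φ^{(4)}(ρ(χ)) = Σ_{λ∈W(χ)} (λ⁴ + 6λ(2)λ² + 8λ(3)λ + 3λ(2)²)`, i.e. (since by
definition `24φ^{(4)}(e^λ) = λ⁴ + 6λ(4) + 6λ(2)λ² + 8λ(3)λ + 3λ(2)²`) the term
`Σ 6λ(4)` drops out. -/
theorem phi_four_of_orbit (n : ℕ) (W : Type*) [Group W] [Finite W]
    [DistribMulAction W (Fin n →₀ ℤ)]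
    (hessential : ∀ v : Fin n →₀ ℤ, (∀ g : W, g • v = v) → v = 0)
    (χ : Fin n →₀ ℤ) (O : Finset (Fin n →₀ ℤ))
    (hO : (O : Set (Fin n →₀ ℤ)) = MulAction.orbit W χ) :
    ∑ v ∈ O, ((weightPow' n 1 v) ^ 4 + 6 * weightPow' n 4 v
        + 6 * weightPow' n 2 v * (weightPow' n 1 v) ^ 2
        + 8 * weightPow' n 3 v * weightPow' n 1 v
        + 3 * (weightPow' n 2 v) ^ 2)
      = ∑ v ∈ O, ((weightPow' n 1 v) ^ 4
        + 6 * weightPow' n 2 v * (weightPow' n 1 v) ^ 2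
        + 8 * weightPow' n 3 v * weightPow' n 1 v
        + 3 * (weightPow' n 2 v) ^ 2) := by
  -- the orbit is invariant under the action of each g
  have himg : ∀ g : W, O.image (fun v => g • v) = O := by
    intro g
    apply Finset.coe_injective
    rw [Finset.coe_image, hO]
    ext x
    constructor
    · rintro ⟨y, ⟨h, rfl⟩, rfl⟩
      exact ⟨g * h, by simp [mul_smul]⟩
    · rintro ⟨h, rfl⟩
      exact ⟨g⁻¹ • h • χ, ⟨g⁻¹ * h, by simp [mul_smul]⟩, by simp⟩
  -- the orbit sum is W-invariant, hence zero
  have hS : ∑ v ∈ O, v = (0 : Fin n →₀ ℤ) := by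
    apply hessential
    intro g
    rw [Finset.smul_sum]
    have := Finset.sum_image (f := fun v : Fin n →₀ ℤ => v) (s := O)
      (g := fun v : Fin n →₀ ℤ => g • v) (fun x _ y _ h => smul_left_cancel g h)
    rw [himg g] at this
    exact this.symm
  -- hence each coordinate sum is zero
  have hcoord : ∀ j : Fin n, ∑ v ∈ O, v j = 0 := by
    intro j
    have := congrArg (fun f : Fin n →₀ ℤ => f j) hS
    simpa [Finsupp.finset_sum_apply] using this
  have h4 : ∑ v ∈ O, weightPow' n 4 v = 0 := by
    unfold weightPow'
    rw [Finset.sum_comm]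
    refine Finset.sum_eq_zero fun j _ => ?_
    rw [← Finset.sum_smul, hcoord j, zero_smul]
  simp only [Finset.sum_add_distrib]
  rw [← Finset.mul_sum, h4]
  ring
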